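/- Let X be a topological space of countable tightness. Then every σ-convex subset F of the space SC*_p(X) of bounded scatteredly continuous real-valued functions on X is a weakly discontinuous family: every subset A ⊆ X contains an open dense subset U ⊆ A such that for every f ∈ F the restriction f|U : U → ℝ is continuous. -/

import Mathlib

open Set Filter Topology Cardinal

/-- A function is scatteredly continuous if every nonempty subset `A` of the domain
contains a point at which the restriction `f|A` is continuous. -/
def ScatCont {X Y : Type*} [TopologicalSpace X] [TopologicalSpace Y] (f : X → Y) : Prop :=
  ∀ A : Set X, A.Nonempty → ∃ a ∈ A, ContinuousWithinAt f A a

/-- A family of functions is scatteredly continuous if every nonempty subset `A` of the domain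
contains a point at which all restrictions `f|A`, `f ∈ F`, are continuous. -/
def ScatContFam {X Y : Type*} [TopologicalSpace X] [TopologicalSpace Y]
    (F : Set (X → Y)) : Prop :=
  ∀ A : Set X, A.Nonempty → ∃ a ∈ A, ∀ f ∈ F, ContinuousWithinAt f A a

/-- A function is weakly discontinuous if every subset `A` of the domain contains an
open (in `A`) dense (in `A`) subset `U` such that `f|U` is continuous. -/
def WeaklyDisc {X Y : Type*} [TopologicalSpace X] [TopologicalSpace Y] (f : X → Y) : Prop :=
  ∀ A : Set X, ∃ U : Set X, U ⊆ A ∧ (∃ V : Set X, IsOpen V ∧ U = V ∩ A) ∧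
    A ⊆ closure U ∧ ContinuousOn f U

/-- A family of functions is weakly discontinuous if every subset `A` of the domain contains an
open (in `A`) dense (in `A`) subset `U` such that every `f|U`, `f ∈ F`, is continuous. -/
def WeaklyDiscFam {X Y : Type*} [TopologicalSpace X] [TopologicalSpace Y]
    (F : Set (X → Y)) : Prop :=
  ∀ A : Set X, ∃ U : Set X, U ⊆ A ∧ (∃ V : Set X, IsOpen V ∧ U = V ∩ A) ∧
    A ⊆ closure U ∧ ∀ f ∈ F, ContinuousOn f U

/-- The decomposition number of a family `F` of functions: the smallest cardinality of a
cover `𝒞` of `X` such that every `f ∈ F` restricted to every `C ∈ 𝒞` is continuous. -/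
noncomputable def Dec {X Y : Type*} [TopologicalSpace X] [TopologicalSpace Y]
    (F : Set (X → Y)) : Cardinal :=
  sInf { c : Cardinal | ∃ 𝒞 : Set (Set X), c = #𝒞 ∧ ⋃₀ 𝒞 = Set.univ ∧
    ∀ C ∈ 𝒞, ∀ f ∈ F, ContinuousOn f C }

/-- The Lindelöf number: the smallest infinite cardinal `κ` such that every open cover
has a subcover of cardinality `≤ κ`. -/
noncomputable def lindelofNum (X : Type*) [TopologicalSpace X] : Cardinal :=
  sInf { κ : Cardinal | Cardinal.aleph0 ≤ κ ∧ ∀ 𝒰 : Set (Set X), (∀ U ∈ 𝒰, IsOpen U) →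
    ⋃₀ 𝒰 = Set.univ → ∃ 𝒱 ⊆ 𝒰, #𝒱 ≤ κ ∧ ⋃₀ 𝒱 = Set.univ }

/-- The hereditary Lindelöf number: the supremum of the Lindelöf numbers of all subspaces. -/
noncomputable def heredLindelofNum (X : Type*) [TopologicalSpace X] : Cardinal :=
  ⨆ Z : Set X, lindelofNum Z

/-- A network for a topological space: a family of (arbitrary) sets such that every open
neighbourhood of every point contains a member of the family containing that point. -/
def IsNetwork {X : Type*} [TopologicalSpace X] (N : Set (Set X)) : Prop :=
  ∀ (x : X) (U : Set X), IsOpen U → x ∈ U → ∃ n ∈ N, x ∈ n ∧ n ⊆ U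

/-- The network weight: the smallest infinite cardinality of a network. -/
noncomputable def netWt (X : Type*) [TopologicalSpace X] : Cardinal :=
  sInf { c : Cardinal | ∃ N : Set (Set X), IsNetwork N ∧ c = max #N Cardinal.aleph0 }

/-- The weight: the smallest infinite cardinality of a base of the topology. -/
noncomputable def wt (X : Type*) [TopologicalSpace X] : Cardinal :=
  sInf { c : Cardinal | ∃ B : Set (Set X), TopologicalSpace.IsTopologicalBasis B ∧
    c = max #B Cardinal.aleph0 }

/-- The density: the smallest cardinality of a dense subset. -/
noncomputable def dens (X : Type*) [TopologicalSpace X] : Cardinal :=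
  sInf { c : Cardinal | ∃ D : Set X, Dense D ∧ c = #D }

/-- The hereditary density: the supremum of densities of all subspaces. -/
noncomputable def heredDens (X : Type*) [TopologicalSpace X] : Cardinal :=
  ⨆ Z : Set X, dens Z

/-- The spread: the supremum of cardinalities of discrete subspaces. -/
noncomputable def spread (X : Type*) [TopologicalSpace X] : Cardinal :=
  sSup { c : Cardinal | ∃ D : Set X, DiscreteTopology D ∧ c = #D }

/-- A subset `C` of a topological vector space over `ℝ` is σ-convex if for every sequence
`(x n)` in `C` and every sequence `(t n)` of positive reals with `∑ n, t n = 1`, the series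
`∑ n, t n • x n` converges to a point of `C`. -/
def SigmaConvex {L : Type*} [AddCommGroup L] [Module ℝ L] [TopologicalSpace L]
    (C : Set L) : Prop :=
  ∀ (x : ℕ → L) (t : ℕ → ℝ), (∀ n, x n ∈ C) → (∀ n, 0 < t n) →
    Tendsto (fun N => ∑ n ∈ Finset.range N, t n) atTop (𝓝 1) →
    ∃ c ∈ C, Tendsto (fun N => ∑ n ∈ Finset.range N, t n • x n) atTop (𝓝 c)

/-- A topological space has countable tightness if every point in the closure of a set `A`
lies in the closure of a countable subset of `A`. -/
def CountablyTight (X : Type*) [TopologicalSpace X] : Prop :=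
  ∀ (A : Set X) (a : X), a ∈ closure A → ∃ B ⊆ A, B.Countable ∧ a ∈ closure B

section AuxSC

open Set Filter Topology

private lemma not_cwa_eps {X : Type*} [TopologicalSpace X] {f : X → ℝ} {S : Set X} {s : X}
    (h : ¬ContinuousWithinAt f S s) :
    ∃ ε, 0 < ε ∧ s ∈ closure {y | y ∈ S ∧ ε ≤ |f y - f s|} := by
  by_contra hc
  push_neg at hc
  apply h
  rw [ContinuousWithinAt, Metric.tendsto_nhds]
  intro δ hδ
  have h2 := hc δ hδ
  rw [mem_closure_iff_nhdsWithin_neBot, not_neBot] at h2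
  have hset : {y | y ∈ S ∧ δ ≤ |f y - f s|} = S ∩ {y | δ ≤ |f y - f s|} := rfl
  rw [hset, nhdsWithin_inter', inf_principal_eq_bot] at h2
  filter_upwards [h2] with y hy
  rw [Real.dist_eq]
  simpa using hy

private def ccSeq {X : Type*} (s₀ : X) (C : X → Set X) : ℕ → Set X
  | 0 => {s₀}
  | n+1 => ccSeq s₀ C n ∪ ⋃ s ∈ ccSeq s₀ C n, C s

private lemma closure_closing {X : Type*} {S : Set X} {s₀ : X} (hs₀ : s₀ ∈ S)
    (C : X → Set X) (hCS : ∀ s ∈ S, C s ⊆ S) (hCc : ∀ s ∈ S, (C s).Countable) :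
    ∃ T, T ⊆ S ∧ T.Countable ∧ s₀ ∈ T ∧ ∀ t ∈ T, C t ⊆ T := by
  have hTS : ∀ n, ccSeq s₀ C n ⊆ S := by
    intro n; induction n with
    | zero => simpa [ccSeq] using hs₀
    | succ n ih =>
      refine union_subset ih (iUnion₂_subset fun s hs => hCS s (ih hs))
  have hTc : ∀ n, (ccSeq s₀ C n).Countable := by
    intro n; induction n with
    | zero => simpa [ccSeq] using countable_singleton s₀
    | succ n ih =>
      exact ih.union (ih.biUnion fun s hs => hCc s (hTS n hs))
  refine ⟨⋃ n, ccSeq s₀ C n, iUnion_subset hTS, countable_iUnion hTc,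
    mem_iUnion.mpr ⟨0, by simp [ccSeq]⟩, ?_⟩
  intro t htmem
  obtain ⟨n, hn⟩ := mem_iUnion.mp htmem
  intro y hy
  exact mem_iUnion.mpr ⟨n+1, Or.inr (mem_biUnion hn hy)⟩

private noncomputable def rW (M ε : ℕ → ℝ) : ℕ → ℝ
  | 0 => 1
  | k+1 => rW M ε k * min (ε k / (32 * M k)) 1

private noncomputable def aW (M ε : ℕ → ℝ) (k : ℕ) : ℝ := (1/2 : ℝ)^k * rW M ε k / M k

private noncomputable def uW (M ε : ℕ → ℝ) (d : ℕ → ℕ → ℝ) : ℕ → ℕ → ℝ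
  | 0 => fun _ => 1
  | k+1 => Function.update (uW M ε d k) k
      (if |(∑ m ∈ Finset.range k, aW M ε m * uW M ε d k m * d m k) + aW M ε k * d k k|
          < aW M ε k * ε k / 2 then 2 else 1)

private noncomputable def vW (M ε : ℕ → ℝ) (d : ℕ → ℕ → ℝ) (k : ℕ) : ℝ :=
  aW M ε k * uW M ε d (k+1) k

private lemma exists_weights (M ε : ℕ → ℝ) (d : ℕ → ℕ → ℝ)
    (hM : ∀ m, 1 ≤ M m) (hε : ∀ k, 0 < ε k)
    (hd1 : ∀ k, ε k ≤ |d k k|) (hd2 : ∀ m k, |d m k| ≤ 2 * M m) :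
    ∃ w : ℕ → ℝ, (∀ n, 0 < w n) ∧ HasSum w 1 ∧ Summable (fun m => w m * M m) ∧
      ∀ k, ∑' m, w m * d m k ≠ 0 := by
  have hMpos : ∀ m, (0:ℝ) < M m := fun m => lt_of_lt_of_le one_pos (hM m)
  have hrpos : ∀ k, 0 < rW M ε k := by
    intro k; induction k with
    | zero => norm_num [rW]
    | succ k ih =>
      have h32 : (0:ℝ) < 32 * M k := by have := hMpos k; linarith
      exact mul_pos ih (lt_min (div_pos (hε k) h32) one_pos)
  have hrone : ∀ k, rW M ε k ≤ 1 := by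
    intro k; induction k with
    | zero => norm_num [rW]
    | succ k ih =>
      calc rW M ε (k+1) = rW M ε k * min (ε k / (32 * M k)) 1 := rfl
        _ ≤ rW M ε k * 1 := mul_le_mul_of_nonneg_left (min_le_right _ _) (hrpos k).le
        _ ≤ 1 := by rw [mul_one]; exact ih
  have hranti : ∀ k j, j ≤ k → rW M ε k ≤ rW M ε j := by
    intro k
    induction k with
    | zero =>
      intro j hj
      have : j = 0 := Nat.le_zero.mp hj
      subst this; exact le_rfl
    | succ k ih =>
      intro j hj
      rcases Nat.lt_or_ge j (k+1) with h | h
      · calc rW M ε (k+1) = rW M ε k * min (ε k / (32 * M k)) 1 := rfl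
          _ ≤ rW M ε k * 1 := mul_le_mul_of_nonneg_left (min_le_right _ _) (hrpos k).le
          _ ≤ rW M ε j := by rw [mul_one]; exact ih j (by omega)
      · have : j = k+1 := by omega
        subst this; exact le_rfl
  have hrkey : ∀ k m, k < m → rW M ε m ≤ rW M ε k * (ε k / (32 * M k)) := by
    intro k m hkm
    calc rW M ε m ≤ rW M ε (k+1) := hranti m (k+1) hkm
      _ = rW M ε k * min (ε k / (32 * M k)) 1 := rfl
      _ ≤ rW M ε k * (ε k / (32 * M k)) :=
        mul_le_mul_of_nonneg_left (min_le_left _ _) (hrpos k).le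
  have hapos : ∀ k, 0 < aW M ε k := by
    intro k
    exact div_pos (mul_pos (by positivity) (hrpos k)) (hMpos k)
  have haM : ∀ k, aW M ε k * M k = (1/2:ℝ)^k * rW M ε k := by
    intro k; unfold aW; rw [div_mul_cancel₀ _ (ne_of_gt (hMpos k))]
  have hale : ∀ k, aW M ε k ≤ (1/2:ℝ)^k := by
    intro k
    calc aW M ε k ≤ (1/2:ℝ)^k * rW M ε k :=
        div_le_self (mul_nonneg (by positivity) (hrpos k).le) (hM k)
      _ ≤ (1/2:ℝ)^k * 1 := mul_le_mul_of_nonneg_left (hrone k) (by positivity)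
      _ = (1/2:ℝ)^k := mul_one _
  have hustab : ∀ n m, m < n → uW M ε d n m = uW M ε d (m+1) m := by
    intro n; induction n with
    | zero => intro m hm; omega
    | succ n ih =>
      intro m hm
      rcases Nat.lt_or_ge m n with h | h
      · have : uW M ε d (n+1) m = uW M ε d n m := by
          show Function.update (uW M ε d n) n _ m = _
          exact Function.update_of_ne (by omega) _ _
        rw [this]; exact ih m h
      · have : m = n := by omega
        subst this; rfl
  have huval : ∀ k, uW M ε d (k+1) k =
      (if |(∑ m ∈ Finset.range k, aW M ε m * uW M ε d k m * d m k) + aW M ε k * d k k|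
          < aW M ε k * ε k / 2 then 2 else 1) := by
    intro k
    show Function.update (uW M ε d k) k _ k = _
    exact Function.update_self _ _ _
  have hu12 : ∀ k, uW M ε d (k+1) k = 1 ∨ uW M ε d (k+1) k = 2 := by
    intro k; rw [huval k]; split_ifs <;> simp
  have hu1 : ∀ k, 1 ≤ uW M ε d (k+1) k := by
    intro k; rcases hu12 k with h | h <;> rw [h] <;> norm_num
  have hu2 : ∀ k, uW M ε d (k+1) k ≤ 2 := by
    intro k; rcases hu12 k with h | h <;> rw [h] <;> norm_num
  have hvpos : ∀ k, 0 < vW M ε d k := by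
    intro k; exact mul_pos (hapos k) (lt_of_lt_of_le one_pos (hu1 k))
  have hvle : ∀ k, vW M ε d k ≤ 2 * aW M ε k := by
    intro k
    calc vW M ε d k = aW M ε k * uW M ε d (k+1) k := rfl
      _ ≤ aW M ε k * 2 := mul_le_mul_of_nonneg_left (hu2 k) (hapos k).le
      _ = 2 * aW M ε k := by ring
  have hvle2 : ∀ k, vW M ε d k ≤ 2 * (1/2:ℝ)^k := by
    intro k; exact (hvle k).trans (by nlinarith [hale k])
  have hvM : ∀ k, vW M ε d k * M k ≤ 2 * (1/2:ℝ)^k := by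
    intro k
    calc vW M ε d k * M k = uW M ε d (k+1) k * (aW M ε k * M k) := by rw [vW]; ring
      _ ≤ 2 * (aW M ε k * M k) := by
          refine mul_le_mul_of_nonneg_right (hu2 k) ?_
          exact (mul_pos (hapos k) (hMpos k)).le
      _ = 2 * ((1/2:ℝ)^k * rW M ε k) := by rw [haM k]
      _ ≤ 2 * ((1/2:ℝ)^k * 1) := by
          refine mul_le_mul_of_nonneg_left ?_ (by norm_num)
          exact mul_le_mul_of_nonneg_left (hrone k) (by positivity)
      _ = 2 * (1/2:ℝ)^k := by ring
  -- key lower bound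
  have hkey : ∀ k, aW M ε k * ε k / 2 ≤
      |(∑ m ∈ Finset.range k, vW M ε d m * d m k) + vW M ε d k * d k k| := by
    intro k
    have hP : (∑ m ∈ Finset.range k, aW M ε m * uW M ε d k m * d m k)
        = ∑ m ∈ Finset.range k, vW M ε d m * d m k := by
      refine Finset.sum_congr rfl (fun m hm => ?_)
      rw [vW, hustab k m (Finset.mem_range.mp hm)]
    have hval := huval k
    rw [hP] at hval
    set a := aW M ε k with ha
    set P := ∑ m ∈ Finset.range k, vW M ε d m * d m k with hPdef
    have hd1k := hd1 k
    have hapk := hapos k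
    by_cases hif : |P + a * d k k| < a * ε k / 2
    · have hu2' : uW M ε d (k+1) k = 2 := by rw [hval, if_pos hif]
      have hgoal : vW M ε d k * d k k = a * 2 * d k k := by rw [vW, hu2', ← ha]
      rw [hgoal]
      have h4 : |a * d k k| = a * |d k k| := by rw [abs_mul, abs_of_pos hapk]
      have h5 : a * d k k = (P + a * 2 * d k k) - (P + a * d k k) := by ring
      have h6 := abs_sub (P + a * 2 * d k k) (P + a * d k k)
      rw [← h5, h4] at h6
      have h7 : a * ε k ≤ a * |d k k| := mul_le_mul_of_nonneg_left hd1k hapk.le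
      linarith
    · have hu1' : uW M ε d (k+1) k = 1 := by rw [hval, if_neg hif]
      have hgoal : vW M ε d k * d k k = a * d k k := by rw [vW, hu1', ← ha]; ring
      rw [hgoal]
      linarith [not_lt.mp hif]
  -- summability
  have hgeo2 : Summable (fun k : ℕ => 2 * (1/2:ℝ)^k) := summable_geometric_two.mul_left 2
  have hsv : Summable (vW M ε d) :=
    Summable.of_nonneg_of_le (fun k => (hvpos k).le) hvle2 hgeo2
  have hsvM : Summable (fun k => vW M ε d k * M k) :=
    Summable.of_nonneg_of_le (fun k => (mul_pos (hvpos k) (hMpos k)).le) hvM hgeo2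
  set Z := ∑' k, vW M ε d k with hZ
  have hZpos : 0 < Z := Summable.tsum_pos hsv (fun i => (hvpos i).le) 0 (hvpos 0)
  have hZne : Z ≠ 0 := ne_of_gt hZpos
  refine ⟨fun k => vW M ε d k / Z, fun k => div_pos (hvpos k) hZpos, ?_, ?_, ?_⟩
  · have := hsv.hasSum.div_const Z
    rwa [div_self hZne] at this
  · refine (hsvM.div_const Z).congr (fun m => ?_)
    ring
  · intro k
    -- tail estimate
    have hterm : ∀ i, |vW M ε d (i + (k+1)) * d (i + (k+1)) k|
        ≤ aW M ε k * ε k / 8 * (1/2:ℝ)^(i+1) := by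
      intro i
      set j := i + (k+1) with hj
      have hkj : k < j := by omega
      have h1 : |vW M ε d j * d j k| = vW M ε d j * |d j k| := by
        rw [abs_mul, abs_of_pos (hvpos j)]
      have h2 : vW M ε d j * |d j k| ≤ (2 * aW M ε j) * (2 * M j) :=
        mul_le_mul (hvle j) (hd2 j k) (abs_nonneg _) (by have := hapos j; linarith)
      have h3 : (2 * aW M ε j) * (2 * M j) = 4 * ((1/2:ℝ)^j * rW M ε j) := by
        rw [show (2 * aW M ε j) * (2 * M j) = 4 * (aW M ε j * M j) by ring, haM j]
      have h4 : (4:ℝ) * ((1/2:ℝ)^j * rW M ε j)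
          ≤ 4 * ((1/2:ℝ)^j * (rW M ε k * (ε k / (32 * M k)))) := by
        have := hrkey k j hkj
        have hp : (0:ℝ) ≤ (1/2:ℝ)^j := by positivity
        nlinarith
      have h5 : (4:ℝ) * ((1/2:ℝ)^j * (rW M ε k * (ε k / (32 * M k))))
          = aW M ε k * ε k / 8 * (1/2:ℝ)^(i+1) := by
        have hsplit : (1/2:ℝ)^j = (1/2:ℝ)^(i+1) * (1/2:ℝ)^k := by
          rw [← pow_add]; congr 1; omega
        rw [hsplit, aW]
        field_simp
        ring
      rw [h1]
      calc vW M ε d j * |d j k| ≤ (2 * aW M ε j) * (2 * M j) := h2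
        _ = 4 * ((1/2:ℝ)^j * rW M ε j) := h3
        _ ≤ 4 * ((1/2:ℝ)^j * (rW M ε k * (ε k / (32 * M k)))) := h4
        _ = aW M ε k * ε k / 8 * (1/2:ℝ)^(i+1) := h5
    have hsgeo : Summable (fun i : ℕ => aW M ε k * ε k / 8 * (1/2:ℝ)^(i+1)) := by
      apply Summable.mul_left
      exact (summable_geometric_two.mul_left (1/2)).congr (fun i => by rw [pow_succ]; ring)
    have hsd : Summable (fun m => vW M ε d m * d m k) := by
      refine Summable.of_norm_bounded (g := fun m => 4 * (1/2:ℝ)^m) (summable_geometric_two.mul_left 4) ?_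
      intro m
      rw [Real.norm_eq_abs, abs_mul, abs_of_pos (hvpos m)]
      calc vW M ε d m * |d m k| ≤ vW M ε d m * (2 * M m) :=
            mul_le_mul_of_nonneg_left (hd2 m k) (hvpos m).le
        _ = 2 * (vW M ε d m * M m) := by ring
        _ ≤ 2 * (2 * (1/2:ℝ)^m) := by linarith [hvM m]
        _ = 4 * (1/2:ℝ)^m := by ring
    have htailabs : |∑' i, vW M ε d (i + (k+1)) * d (i + (k+1)) k| ≤ aW M ε k * ε k / 8 := by
      have habs : Summable (fun i => |vW M ε d (i + (k+1)) * d (i + (k+1)) k|) := by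
        refine Summable.of_nonneg_of_le (fun i => abs_nonneg _) hterm hsgeo
      have h1 : |∑' i, vW M ε d (i + (k+1)) * d (i + (k+1)) k|
          ≤ ∑' i, |vW M ε d (i + (k+1)) * d (i + (k+1)) k| := by
        have h0 : Summable fun i => ‖vW M ε d (i + (k+1)) * d (i + (k+1)) k‖ := by
          simp only [Real.norm_eq_abs]; exact habs
        have := norm_tsum_le_tsum_norm (f := fun i => vW M ε d (i + (k+1)) * d (i + (k+1)) k) h0
        simp only [Real.norm_eq_abs] at this
        exact this
      have h2 : ∑' i, |vW M ε d (i + (k+1)) * d (i + (k+1)) k|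
          ≤ ∑' i : ℕ, aW M ε k * ε k / 8 * (1/2:ℝ)^(i+1) := Summable.tsum_le_tsum hterm habs hsgeo
      have h3 : ∑' i : ℕ, aW M ε k * ε k / 8 * (1/2:ℝ)^(i+1) = aW M ε k * ε k / 8 := by
        rw [tsum_mul_left]
        have : ∑' i : ℕ, (1/2:ℝ)^(i+1) = 1 := by
          have h4 : ∑' i : ℕ, (1/2:ℝ)^(i+1) = ∑' i : ℕ, (1/2:ℝ)^i * (1/2) := by
            refine tsum_congr (fun i => ?_); rw [pow_succ]
          rw [h4, tsum_mul_right, tsum_geometric_two]; norm_num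
        rw [this, mul_one]
      linarith
    have hsplit := Summable.sum_add_tsum_nat_add (f := fun m => vW M ε d m * d m k) (k+1) hsd
    have hrange : ∑ m ∈ Finset.range (k+1), vW M ε d m * d m k
        = (∑ m ∈ Finset.range k, vW M ε d m * d m k) + vW M ε d k * d k k :=
      Finset.sum_range_succ _ k
    have hlow : aW M ε k * ε k / 4 ≤ |∑' m, vW M ε d m * d m k| := by
      have h1 := hkey k
      set Q := (∑ m ∈ Finset.range k, vW M ε d m * d m k) + vW M ε d k * d k k with hQ
      set R := ∑' i, vW M ε d (i + (k+1)) * d (i + (k+1)) k with hR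
      have h2 : ∑' m, vW M ε d m * d m k = Q + R := by
        rw [← hsplit, hrange]
      rw [h2]
      have h3 := abs_sub (Q + R) R
      have h4 : Q + R - R = Q := by ring
      rw [h4] at h3
      have hεk := hε k
      have hak := hapos k
      have haε : 0 < aW M ε k * ε k := mul_pos hak hεk
      linarith [htailabs]
    have hpos4 : 0 < aW M ε k * ε k / 4 :=
      div_pos (mul_pos (hapos k) (hε k)) (by norm_num)
    have hne : ∑' m, vW M ε d m * d m k ≠ 0 := by
      intro h0; rw [h0] at hlow; simp at hlow; linarith
    -- actual goal
    have : ∑' m, vW M ε d m / Z * d m k = (∑' m, vW M ε d m * d m k) / Z := by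
      rw [eq_div_iff hZne, ← tsum_mul_right]
      refine tsum_congr (fun m => ?_)
      field_simp
    rw [this]
    exact div_ne_zero hne hZne

end AuxSC

private theorem scatContFam_of_sigmaConvex {X : Type*} [TopologicalSpace X]
    (ht : CountablyTight X) (F : Set (X → ℝ))
    (hF : ∀ f ∈ F, ScatCont f ∧ ∃ M : ℝ, ∀ x, |f x| ≤ M)
    (hσ : SigmaConvex F) : ScatContFam F := by
  classical
  intro A hA
  by_contra hcon
  push_neg at hcon
  have hcon' : ∀ s, s ∈ A → ∃ f, f ∈ F ∧ ¬ContinuousWithinAt f A s := by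
    intro s hs; obtain ⟨f, hf1, hf2⟩ := hcon s hs; exact ⟨f, hf1, hf2⟩
  choose! f hfF hfn using hcon'
  have heps : ∀ s, s ∈ A → ∃ ε, 0 < ε ∧ s ∈ closure {y | y ∈ A ∧ ε ≤ |f s y - f s s|} :=
    fun s hs => not_cwa_eps (hfn s hs)
  choose! ε hεpos hεcl using heps
  have hct : ∀ s, s ∈ A →
      ∃ C, C ⊆ {y | y ∈ A ∧ ε s ≤ |f s y - f s s|} ∧ C.Countable ∧ s ∈ closure C :=
    fun s hs => ht _ s (hεcl s hs)
  choose! C hC using hct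
  obtain ⟨a₀, ha₀⟩ := hA
  obtain ⟨T, hTA, hTc, ha₀T, hTcl⟩ := closure_closing ha₀ C
    (fun s hs => ((hC s hs).1).trans (fun y hy => hy.1))
    (fun s hs => (hC s hs).2.1)
  have hTne : T.Nonempty := ⟨a₀, ha₀T⟩
  obtain ⟨t, hTr⟩ := hTc.exists_eq_range hTne
  have htT : ∀ k, t k ∈ T := fun k => hTr ▸ mem_range_self k
  have htA : ∀ k, t k ∈ A := fun k => hTA (htT k)
  set h : ℕ → X → ℝ := fun k => f (t k) with hh
  have hhF : ∀ k, h k ∈ F := fun k => hfF (t k) (htA k)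
  choose Mb hMb using fun k => (hF (h k) (hhF k)).2
  set M : ℕ → ℝ := fun k => max (Mb k) 1 with hM
  have hM1 : ∀ k, 1 ≤ M k := fun k => le_max_right _ _
  have hMh : ∀ k x, |h k x| ≤ M k := fun k x => (hMb k x).trans (le_max_left _ _)
  set εk : ℕ → ℝ := fun k => ε (t k) with hεk'
  have hεkpos : ∀ k, 0 < εk k := fun k => hεpos (t k) (htA k)
  set Ck : ℕ → Set X := fun k => C (t k) with hCk'
  have hCkT : ∀ k, Ck k ⊆ T := fun k => hTcl (t k) (htT k)
  have hCkgap : ∀ k y, y ∈ Ck k → εk k ≤ |h k y - h k (t k)| :=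
    fun k y hy => ((hC (t k) (htA k)).1 hy).2
  have hCkcl : ∀ k, t k ∈ closure (Ck k) := fun k => (hC (t k) (htA k)).2.2
  have hNB : ∀ k, (𝓝[Ck k] (t k)).NeBot := fun k =>
    mem_closure_iff_nhdsWithin_neBot.mp (hCkcl k)
  have hUex : ∀ k, ∃ U : Ultrafilter X, (U : Filter X) ≤ 𝓝[Ck k] (t k) :=
    fun k => ⟨@Ultrafilter.of _ _ (hNB k), @Ultrafilter.of_le _ _ (hNB k)⟩
  choose U hUle using hUex
  have hCkU : ∀ k, Ck k ∈ U k := by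
    intro k
    have h1 : 𝓝[Ck k] (t k) ≤ 𝓟 (Ck k) := by
      rw [nhdsWithin]; exact inf_le_right
    exact le_principal_iff.mp ((hUle k).trans h1)
  have hlamE : ∀ m k, ∃ L, Tendsto (h m) (U k) (𝓝 L) ∧ |L| ≤ M m := by
    intro m k
    obtain ⟨L, hLmem, hLle⟩ := (isCompact_Icc (a := -(M m)) (b := M m)).ultrafilter_le_nhds
      ((U k).map (h m))
      (by
        rw [Ultrafilter.coe_map, le_principal_iff, mem_map]
        refine univ_mem' (fun y => ?_)
        have := abs_le.mp (hMh m y)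
        exact ⟨this.1, this.2⟩)
    refine ⟨L, ?_, abs_le.mpr ⟨hLmem.1, hLmem.2⟩⟩
    have : Filter.map (h m) (U k) ≤ 𝓝 L := by rwa [Ultrafilter.coe_map] at hLle
    exact this
  choose lam hlamT hlamB using hlamE
  set d : ℕ → ℕ → ℝ := fun m k => lam m k - h m (t k) with hd
  have hd1 : ∀ k, εk k ≤ |d k k| := by
    intro k
    have h1 : Tendsto (fun y => |h k y - h k (t k)|) (U k) (𝓝 |d k k|) :=
      ((hlamT k k).sub tendsto_const_nhds).abs
    exact ge_of_tendsto h1 (eventually_of_mem (by exact hCkU k) (fun y hy => hCkgap k y hy))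
  have hd2 : ∀ m k, |d m k| ≤ 2 * M m := by
    intro m k
    have h1 : |h m (t k)| ≤ M m := hMh m (t k)
    have h2 := hlamB m k
    calc |d m k| ≤ |lam m k| + |h m (t k)| := abs_sub _ _
      _ ≤ 2 * M m := by linarith
  obtain ⟨w, hwpos, hw1, hwM, hwd⟩ := exists_weights M εk d hM1 hεkpos hd1 hd2
  obtain ⟨c, hcF, hcT⟩ := hσ h w hhF hwpos hw1.tendsto_sum_nat
  have hcpt : ∀ x, Tendsto (fun N => ∑ n ∈ Finset.range N, w n * h n x) atTop (𝓝 (c x)) := by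
    intro x
    have h1 := tendsto_pi_nhds.mp hcT x
    have h2 : ∀ N, (∑ n ∈ Finset.range N, w n • h n) x = ∑ n ∈ Finset.range N, w n * h n x := by
      intro N
      rw [Finset.sum_apply]
      exact Finset.sum_congr rfl (fun n _ => rfl)
    simpa [h2] using h1
  have hsum : ∀ x, Summable (fun m => w m * h m x) := by
    intro x
    refine Summable.of_norm_bounded hwM ?_
    intro m
    rw [Real.norm_eq_abs, abs_mul, abs_of_pos (hwpos m)]
    exact mul_le_mul_of_nonneg_left (hMh m x) (hwpos m).le
  have hHS : ∀ x, HasSum (fun m => w m * h m x) (c x) := by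
    intro x
    have h1 := (hsum x).hasSum
    exact (tendsto_nhds_unique h1.tendsto_sum_nat (hcpt x)) ▸ h1
  set tailT : ℕ → ℝ := fun N => ∑' i, w (i + N) * M (i + N) with htailT
  have hwM' : ∀ N, Summable (fun i => w (i + N) * M (i + N)) :=
    fun N => (summable_nat_add_iff (f := fun m => w m * M m) N).mpr hwM
  have htail0 : Tendsto tailT atTop (𝓝 0) := by
    have h1 := tendsto_sum_nat_add (f := fun m => w m * M m)
    exact h1
  have hdiff : ∀ N y, |c y - ∑ m ∈ Finset.range N, w m * h m y| ≤ tailT N := by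
    intro N y
    have hs := hsum y
    have h1 := Summable.sum_add_tsum_nat_add (f := fun m => w m * h m y) N hs
    have h2 : ∑' m, w m * h m y = c y := (hHS y).tsum_eq
    have h3 : c y - ∑ m ∈ Finset.range N, w m * h m y = ∑' i, w (i + N) * h (i + N) y := by
      rw [← h2, ← h1]; ring
    rw [h3]
    have habs : Summable (fun i => |w (i + N) * h (i + N) y|) := by
      refine Summable.of_nonneg_of_le (fun i => abs_nonneg _) (fun i => ?_) (hwM' N)
      rw [abs_mul, abs_of_pos (hwpos _)]
      exact mul_le_mul_of_nonneg_left (hMh _ y) (hwpos _).le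
    have h4 : |∑' i, w (i + N) * h (i + N) y| ≤ ∑' i, |w (i + N) * h (i + N) y| := by
      have h0 : Summable fun i => ‖w (i + N) * h (i + N) y‖ := by
        simp only [Real.norm_eq_abs]; exact habs
      have h5 := norm_tsum_le_tsum_norm (f := fun i => w (i + N) * h (i + N) y) h0
      simp only [Real.norm_eq_abs] at h5
      exact h5
    have h6 : ∑' i, |w (i + N) * h (i + N) y| ≤ tailT N := by
      refine Summable.tsum_le_tsum (fun i => ?_) habs (hwM' N)
      rw [abs_mul, abs_of_pos (hwpos _)]
      exact mul_le_mul_of_nonneg_left (hMh _ y) (hwpos _).le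
    linarith
  have hnc : ∀ k, ¬ ContinuousWithinAt c T (t k) := by
    intro k hk
    haveI : (𝓝[Ck k] (t k)).NeBot := hNB k
    have hUT : (U k : Filter X) ≤ 𝓝[T] (t k) := (hUle k).trans (nhdsWithin_mono _ (hCkT k))
    have h1 : Tendsto c (U k) (𝓝 (c (t k))) := hk.mono_left hUT
    have hLn : ∀ N : ℕ, Tendsto (fun y => ∑ m ∈ Finset.range N, w m * h m y) (U k)
        (𝓝 (∑ m ∈ Finset.range N, w m * lam m k)) := by
      intro N
      exact tendsto_finset_sum _ (fun m _ => (hlamT m k).const_mul (w m))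
    have h5 : ∀ N, |c (t k) - ∑ m ∈ Finset.range N, w m * lam m k| ≤ tailT N := by
      intro N
      have h6 : Tendsto (fun y => |c y - ∑ m ∈ Finset.range N, w m * h m y|) (U k)
          (𝓝 |c (t k) - ∑ m ∈ Finset.range N, w m * lam m k|) := (h1.sub (hLn N)).abs
      exact le_of_tendsto h6 (Filter.Eventually.of_forall (fun y => hdiff N y))
    have h7 : Tendsto (fun N => ∑ m ∈ Finset.range N, w m * lam m k) atTop (𝓝 (c (t k))) := by
      have h8 : Tendsto (fun N => (∑ m ∈ Finset.range N, w m * lam m k) - c (t k)) atTop (𝓝 0) := by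
        refine squeeze_zero_norm (fun N => ?_) htail0
        rw [Real.norm_eq_abs, abs_sub_comm]
        exact h5 N
      have h9 := h8.add_const (c (t k))
      simpa using h9
    have hsuml : Summable (fun m => w m * lam m k) := by
      refine Summable.of_norm_bounded hwM ?_
      intro m
      rw [Real.norm_eq_abs, abs_mul, abs_of_pos (hwpos m)]
      exact mul_le_mul_of_nonneg_left (hlamB m k) (hwpos m).le
    have hHSl : HasSum (fun m => w m * lam m k) (c (t k)) := by
      have h10 := hsuml.hasSum
      exact (tendsto_nhds_unique h10.tendsto_sum_nat h7) ▸ h10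
    have hHS0 : HasSum (fun m => w m * d m k) 0 := by
      have h11 := hHSl.sub (hHS (t k))
      rw [sub_self] at h11
      have h12 : (fun m => w m * lam m k - w m * h m (t k)) = (fun m => w m * d m k) := by
        funext m; simp only [hd]; ring
      rwa [h12] at h11
    exact hwd k hHS0.tsum_eq
  obtain ⟨s, hsT, hsc⟩ := (hF c hcF).1 T hTne
  have hsr : s ∈ range t := hTr ▸ hsT
  obtain ⟨k, rfl⟩ := hsr
  exact hnc k hsc

/-- For any topological space `X` of countable tightness, each σ-convex subset `F` of the
space `SC*_p(X)` of bounded scatteredly continuous real-valued functions is a weakly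
discontinuous family. -/
theorem stmt7 {X : Type*} [TopologicalSpace X] (ht : CountablyTight X)
    (F : Set (X → ℝ)) (hF : ∀ f ∈ F, ScatCont f ∧ ∃ M : ℝ, ∀ x, |f x| ≤ M)
    (hσ : SigmaConvex F) :
    WeaklyDiscFam F := by
  classical
  have hscf : ScatContFam F := scatContFam_of_sigmaConvex ht F hF hσ
  intro A
  set OO : Set (Set X) := {O | IsOpen O ∧ ∀ f ∈ F, ContinuousOn f (O ∩ A)} with hOO
  set U : Set X := (⋃₀ OO) ∩ A with hU
  have hUopen : IsOpen (⋃₀ OO) := isOpen_sUnion (fun O hO => hO.1)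
  have hUcont : ∀ f ∈ F, ContinuousOn f U := by
    intro g hg x hx
    obtain ⟨O, hOmem, hxO⟩ := hx.1
    have hcw : ContinuousWithinAt g (O ∩ A) x := hOmem.2 g hg x ⟨hxO, hx.2⟩
    have hcw2 : ContinuousWithinAt g (U ∩ O) x :=
      hcw.mono (fun y hy => ⟨hy.2, hy.1.2⟩)
    exact (continuousWithinAt_inter (hOmem.1.mem_nhds hxO)).mp hcw2
  refine ⟨U, inter_subset_right, ⟨⋃₀ OO, hUopen, rfl⟩, ?_, hUcont⟩
  -- density
  by_contra hnd
  rw [not_subset] at hnd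
  obtain ⟨b₀, hb₀A, hb₀n⟩ := hnd
  set B : Set X := A ∩ (closure U)ᶜ with hB
  have hb₀B : b₀ ∈ B := ⟨hb₀A, hb₀n⟩
  set D : Set X := {b | b ∈ B ∧ ∃ f ∈ F, ¬ContinuousWithinAt f B b} with hD
  have hDsubB : D ⊆ B := fun b hb => hb.1
  -- claim: B ⊆ closure D
  have hDd : B ⊆ closure D := by
    intro b hb
    by_contra hbn
    have hOV : ((closure U)ᶜ ∩ (closure D)ᶜ) ∈ OO := by
      refine ⟨(isClosed_closure.isOpen_compl).inter isClosed_closure.isOpen_compl, ?_⟩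
      intro g hg x hx
      have hxB : x ∈ B := ⟨hx.2, hx.1.1⟩
      have hxnD : x ∉ D := fun hxd => hx.1.2 (subset_closure hxd)
      have hxall : ∀ f ∈ F, ContinuousWithinAt f B x := by
        intro f hf
        by_contra hnc
        exact hxnD ⟨hxB, f, hf, hnc⟩
      exact (hxall g hg).mono (fun y hy => ⟨hy.2, hy.1.1⟩)
    have hbU : b ∈ U := ⟨⟨_, hOV, ⟨hb.2, hbn⟩⟩, hb.1⟩
    exact hb.2 (subset_closure hbU)
  have hDne : D.Nonempty := by
    rcases D.eq_empty_or_nonempty with h | h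
    · rw [h, closure_empty] at hDd
      exact absurd (hDd hb₀B) (fun hx => hx)
    · exact h
  -- data per point of D
  have hDex : ∀ e, e ∈ D → ∃ f, f ∈ F ∧ ¬ContinuousWithinAt f B e := by
    intro e he; obtain ⟨f, h1, h2⟩ := he.2; exact ⟨f, h1, h2⟩
  choose! g hgF hgn using hDex
  have heps : ∀ e, e ∈ D → ∃ ε, 0 < ε ∧ e ∈ closure {y | y ∈ B ∧ ε ≤ |g e y - g e e|} :=
    fun e he => not_cwa_eps (hgn e he)
  choose! ε hεpos hεcl using heps
  -- upgrading: witnesses can be taken in D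
  have hup : ∀ e, e ∈ D → e ∈ closure {z | z ∈ D ∧ ε e / 2 ≤ |g e z - g e e|} := by
    intro e he
    have hYsub : {y | y ∈ B ∧ ε e ≤ |g e y - g e e|}
        ⊆ closure {z | z ∈ D ∧ ε e / 2 ≤ |g e z - g e e|} := by
      intro y hy
      by_cases hyD : y ∈ D
      · exact subset_closure ⟨hyD, by linarith [hy.2, hεpos e he]⟩
      · have hyall : ∀ f ∈ F, ContinuousWithinAt f B y := by
          intro f hf
          by_contra hnc
          exact hyD ⟨hy.1, f, hf, hnc⟩
        have hcwa : ContinuousWithinAt (g e) B y := hyall (g e) (hgF e he)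
        have hev : ∀ᶠ z in 𝓝[B] y, |g e z - g e y| < ε e / 2 := by
          have h1 := Metric.tendsto_nhds.mp hcwa (ε e / 2) (by linarith [hεpos e he])
          filter_upwards [h1] with z hz
          rwa [Real.dist_eq] at hz
        haveI hNB : (𝓝[D] y).NeBot := mem_closure_iff_nhdsWithin_neBot.mp (hDd hy.1)
        have hevD : ∀ᶠ z in 𝓝[D] y, |g e z - g e y| < ε e / 2 :=
          hev.filter_mono (nhdsWithin_mono _ hDsubB)
        have hevE : ∀ᶠ z in 𝓝[D] y, z ∈ {z | z ∈ D ∧ ε e / 2 ≤ |g e z - g e e|} := by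
          filter_upwards [hevD, self_mem_nhdsWithin] with z h1 h2
          refine ⟨h2, ?_⟩
          have h3 : |g e y - g e e| ≤ |g e y - g e z| + |g e z - g e e| := abs_sub_le _ _ _
          have h4 : |g e y - g e z| = |g e z - g e y| := abs_sub_comm _ _
          have h5 := hy.2
          linarith
        rw [mem_closure_iff_nhdsWithin_neBot]
        have h6 : 𝓝[D] y ≤ 𝓟 {z | z ∈ D ∧ ε e / 2 ≤ |g e z - g e e|} :=
          le_principal_iff.mpr hevE
        have h7 : 𝓝[D] y ≤ 𝓝[{z | z ∈ D ∧ ε e / 2 ≤ |g e z - g e e|}] y := by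
          rw [nhdsWithin]
          exact le_inf (nhdsWithin_le_nhds) h6
        exact hNB.mono h7
    have := closure_mono hYsub (hεcl e he)
    rwa [closure_closure] at this
  -- countable tightness witnesses in D
  have hct : ∀ e, e ∈ D →
      ∃ C, C ⊆ {z | z ∈ D ∧ ε e / 2 ≤ |g e z - g e e|} ∧ C.Countable ∧ e ∈ closure C :=
    fun e he => ht _ e (hup e he)
  choose! C hC using hct
  obtain ⟨d₀, hd₀⟩ := hDne
  obtain ⟨T, hTD, hTc, hd₀T, hTcl⟩ := closure_closing hd₀ C
    (fun e he => ((hC e he).1).trans (fun z hz => hz.1))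
    (fun e he => (hC e he).2.1)
  obtain ⟨s, hsT, hjoint⟩ := hscf T ⟨d₀, hd₀T⟩
  have hsD : s ∈ D := hTD hsT
  have hcwa : ContinuousWithinAt (g s) T s := hjoint (g s) (hgF s hsD)
  have hev : ∀ᶠ z in 𝓝[T] s, |g s z - g s s| < ε s / 2 := by
    have h1 := Metric.tendsto_nhds.mp hcwa (ε s / 2) (by linarith [hεpos s hsD])
    filter_upwards [h1] with z hz
    rwa [Real.dist_eq] at hz
  haveI hNB : (𝓝[C s] s).NeBot := mem_closure_iff_nhdsWithin_neBot.mp ((hC s hsD).2.2)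
  have hevC : ∀ᶠ z in 𝓝[C s] s, |g s z - g s s| < ε s / 2 :=
    hev.filter_mono (nhdsWithin_mono _ (hTcl s hsT))
  have hall : ∀ᶠ z in 𝓝[C s] s, False := by
    filter_upwards [hevC, self_mem_nhdsWithin] with z h1 h2
    have h3 : ε s / 2 ≤ |g s z - g s s| := ((hC s hsD).1 h2).2
    linarith
  exact hall.exists.elim (fun _ hf => hf)
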